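/- Let T be a compact Hausdorff space, 𝓑 a base for the topology of T closed under finite unions and finite intersections, X a topological space, and 𝓖 a 𝓑-covering of X with intersection preserving associated surjection G : S_𝓑 → 𝓖. Define K = (X × T) \ ⋃{G(B,D) × (T \ closure(B)) : (B,D) ∈ S_𝓑} and L = (X × T) \ ⋃{G(B,D) × (T \ closure(D)) : (B,D) ∈ S_𝓑}, and for B, D ∈ 𝓑 define H(B,D) = {x ∈ X : K_x ⊆ B and L_x ⊆ D}, where K_x = {t ∈ T : (x,t) ∈ K} and L_x = {t ∈ T : (x,t) ∈ L}. Then H(B,D) ⊆ G(B,D) for every (B,D) ∈ S_𝓑. -/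

import Mathlib

open Set TopologicalSpace

/-- A map `G` on ordered pairs of sets is intersection preserving on a domain `D` if
`G(A,B) ∩ G(A',B') = G(A ∩ A', B ∩ B')` for all pairs in `D`. -/
def IntersectionPreserving {T X : Type*} (D : Set (Set T × Set T))
    (G : Set T × Set T → Set X) : Prop :=
  ∀ p ∈ D, ∀ q ∈ D, G p ∩ G q = G (p.1 ∩ q.1, p.2 ∩ q.2)

/-- `S_𝓑`: the pairs `(B, D)` of members of the base with disjoint closures. -/
def SB {T : Type*} [TopologicalSpace T] (𝓑 : Set (Set T)) : Set (Set T × Set T) :=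
  {p | p.1 ∈ 𝓑 ∧ p.2 ∈ 𝓑 ∧ closure p.1 ∩ closure p.2 = ∅}

/-- `𝓑` is a base for the topology of `T` closed under (binary) unions and intersections. -/
def IsGoodBase {T : Type*} [TopologicalSpace T] (𝓑 : Set (Set T)) : Prop :=
  IsTopologicalBasis 𝓑 ∧ (∀ b ∈ 𝓑, ∀ d ∈ 𝓑, b ∪ d ∈ 𝓑) ∧ (∀ b ∈ 𝓑, ∀ d ∈ 𝓑, b ∩ d ∈ 𝓑)

/-- `G : S_𝓑 → 𝒫(X)` is the associated map of a `𝓑`-covering of `X`: it is intersection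
preserving, its values on `S_𝓑` are open, and they cover `X`. -/
def IsBCoveringMap {T X : Type*} [TopologicalSpace T] [TopologicalSpace X]
    (𝓑 : Set (Set T)) (G : Set T × Set T → Set X) : Prop :=
  IntersectionPreserving (SB 𝓑) G ∧ (∀ p ∈ SB 𝓑, IsOpen (G p)) ∧
    (⋃ p ∈ SB 𝓑, G p) = Set.univ

/-- A family `𝓖` of subsets of `X` is a `𝓑`-covering of `X` if it is the (surjective) image of
`S_𝓑` under some intersection preserving map whose values are open and cover `X`. -/
def IsBCovering {T X : Type*} [TopologicalSpace T] [TopologicalSpace X]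
    (𝓑 : Set (Set T)) (𝓖 : Set (Set X)) : Prop :=
  ∃ G : Set T × Set T → Set X, IsBCoveringMap 𝓑 G ∧ G '' (SB 𝓑) = 𝓖

/-- `G : 𝓑 × 𝓑 → 𝒫(X)` is the associated map of a pre-`𝓑`-covering of `X`: it is intersection
preserving on `𝓑 × 𝓑`, all its values on `𝓑 × 𝓑` are open, and its restriction to `S_𝓑`
is (the associated map of) a `𝓑`-covering, i.e. the values over `S_𝓑` already cover `X`. -/
def IsPreBCoveringMap {T X : Type*} [TopologicalSpace T] [TopologicalSpace X]
    (𝓑 : Set (Set T)) (G : Set T × Set T → Set X) : Prop :=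
  IntersectionPreserving (𝓑 ×ˢ 𝓑) G ∧ (∀ p ∈ 𝓑 ×ˢ 𝓑, IsOpen (G p)) ∧
    (⋃ p ∈ SB 𝓑, G p) = Set.univ

/-- A normal space: both T₄ (disjoint closed sets are separated) and Hausdorff. -/
def IsNormalHausdorff (X : Type*) [TopologicalSpace X] : Prop :=
  NormalSpace X ∧ T2Space X

/-- A perfect map: a continuous closed surjection all of whose fibers are compact. -/
def IsPerfectMap {X Y : Type*} [TopologicalSpace X] [TopologicalSpace Y] (p : X → Y) : Prop :=
  Continuous p ∧ IsClosedMap p ∧ Function.Surjective p ∧ ∀ y : Y, IsCompact (p ⁻¹' {y})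

/-- `𝓥` is a locally finite open refinement of `𝓖`: an open cover, locally finite, each of
whose members is contained in some member of `𝓖`. -/
def IsLocallyFiniteOpenRefinement {X : Type*} [TopologicalSpace X]
    (𝓖 𝓥 : Set (Set X)) : Prop :=
  (∀ v ∈ 𝓥, IsOpen v) ∧ ⋃₀ 𝓥 = Set.univ ∧
    (∀ x : X, ∃ U : Set X, IsOpen U ∧ x ∈ U ∧ {v ∈ 𝓥 | (v ∩ U).Nonempty}.Finite) ∧
    ∀ v ∈ 𝓥, ∃ u ∈ 𝓖, v ⊆ u

/-- With `K`, `L` as in the previous statement, define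
`H(B,D) = {x | K_x ⊆ B ∧ L_x ⊆ D}`. Then `H(B,D) ⊆ G(B,D)` for every `(B,D) ∈ S_𝓑`. -/
theorem stmt_12 {T X : Type*} [TopologicalSpace T] [TopologicalSpace X]
    [CompactSpace T] [T2Space T]
    (𝓑 : Set (Set T)) (h𝓑 : IsGoodBase 𝓑)
    (G : Set T × Set T → Set X) (hG : IsBCoveringMap 𝓑 G)
    (K L : Set (X × T))
    (hKdef : K = Set.univ \ ⋃ q ∈ SB 𝓑, (G q) ×ˢ (closure q.1)ᶜ)
    (hLdef : L = Set.univ \ ⋃ q ∈ SB 𝓑, (G q) ×ˢ (closure q.2)ᶜ) :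
    ∀ q ∈ SB 𝓑,
      {x : X | {t : T | (x, t) ∈ K} ⊆ q.1 ∧ {t : T | (x, t) ∈ L} ⊆ q.2} ⊆ G q := by
  classical
  obtain ⟨hIP, hOpen, hCov⟩ := hG
  have hSBinter : ∀ p ∈ SB 𝓑, ∀ r ∈ SB 𝓑, (p.1 ∩ r.1, p.2 ∩ r.2) ∈ SB 𝓑 := by
    rintro p ⟨hp1, hp2, hp3⟩ r ⟨hr1, hr2, hr3⟩
    refine ⟨h𝓑.2.2 _ hp1 _ hr1, h𝓑.2.2 _ hp2 _ hr2, ?_⟩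
    apply eq_empty_of_subset_empty
    calc closure (p.1 ∩ r.1) ∩ closure (p.2 ∩ r.2)
        ⊆ closure p.1 ∩ closure p.2 :=
          inter_subset_inter (closure_mono inter_subset_left)
            (closure_mono inter_subset_left)
      _ = ∅ := hp3
  rintro ⟨B, D⟩ hq x ⟨hKx, hLx⟩
  -- from K_x ⊆ B: every t ∉ B is avoided by some pair's closure
  have hK' : ∀ t ∉ B, ∃ r ∈ SB 𝓑, x ∈ G r ∧ t ∉ closure r.1 := by
    intro t ht
    by_contra h
    push_neg at h
    refine ht (hKx ?_)
    simp only [hKdef, mem_setOf_eq, mem_diff, mem_univ, true_and, mem_iUnion]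
    rintro ⟨r, hr, hxr, htr⟩
    exact htr (h r hr hxr)
  have hL' : ∀ t ∉ D, ∃ r ∈ SB 𝓑, x ∈ G r ∧ t ∉ closure r.2 := by
    intro t ht
    by_contra h
    push_neg at h
    refine ht (hLx ?_)
    simp only [hLdef, mem_setOf_eq, mem_diff, mem_univ, true_and, mem_iUnion]
    rintro ⟨r, hr, hxr, htr⟩
    exact htr (h r hr hxr)
  set ι := {r : Set T × Set T // r ∈ SB 𝓑 ∧ x ∈ G r}
  have hcompK : IsCompact Bᶜ := by
    have : IsOpen B := h𝓑.1.isOpen hq.1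
    exact this.isClosed_compl.isCompact
  have hcompL : IsCompact Dᶜ := by
    have : IsOpen D := h𝓑.1.isOpen hq.2.1
    exact this.isClosed_compl.isCompact
  obtain ⟨s, hs⟩ := hcompK.elim_finite_subcover
      (fun i : ι => (closure i.1.1)ᶜ)
      (fun i => isClosed_closure.isOpen_compl)
      (by
        intro t ht
        obtain ⟨r, hr, hxr, htr⟩ := hK' t ht
        exact mem_iUnion.2 ⟨⟨r, hr, hxr⟩, htr⟩)
  obtain ⟨s', hs'⟩ := hcompL.elim_finite_subcover
      (fun i : ι => (closure i.1.2)ᶜ)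
      (fun i => isClosed_closure.isOpen_compl)
      (by
        intro t ht
        obtain ⟨r, hr, hxr, htr⟩ := hL' t ht
        exact mem_iUnion.2 ⟨⟨r, hr, hxr⟩, htr⟩)
  -- fold G over the finite set s ∪ s'
  have key : ∀ u : Finset ι, ∃ p ∈ SB 𝓑, x ∈ G p ∧ ∀ i ∈ u, p.1 ⊆ i.1.1 ∧ p.2 ⊆ i.1.2 := by
    intro u
    induction u using Finset.induction with
    | empty =>
        have : x ∈ ⋃ p ∈ SB 𝓑, G p := hCov ▸ mem_univ x
        obtain ⟨p, hp, hxp⟩ := mem_iUnion₂.1 this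
        exact ⟨p, hp, hxp, by simp⟩
    | insert _ _ hni ih =>
        rename_i i u'
        obtain ⟨p, hp, hxp, hsub⟩ := ih
        refine ⟨(p.1 ∩ i.1.1, p.2 ∩ i.1.2), hSBinter p hp i.1 i.2.1, ?_, ?_⟩
        · have := hIP p hp i.1 i.2.1
          exact this ▸ ⟨hxp, i.2.2⟩
        · intro j hj
          rcases Finset.mem_insert.1 hj with rfl | hj'
          · exact ⟨inter_subset_right, inter_subset_right⟩
          · exact ⟨(inter_subset_left).trans (hsub j hj').1,
              (inter_subset_left).trans (hsub j hj').2⟩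
  obtain ⟨p, hp, hxp, hsub⟩ := key (s ∪ s')
  have hpB : p.1 ⊆ B := by
    intro t htp
    by_contra ht
    obtain ⟨i, hi, hti⟩ := mem_iUnion₂.1 (hs ht)
    exact hti ((subset_closure.trans (closure_mono
      (hsub i (Finset.mem_union_left _ hi)).1)) htp)
  have hpD : p.2 ⊆ D := by
    intro t htp
    by_contra ht
    obtain ⟨i, hi, hti⟩ := mem_iUnion₂.1 (hs' ht)
    exact hti ((subset_closure.trans (closure_mono
      (hsub i (Finset.mem_union_right _ hi)).2)) htp)
  have hfin := hIP p hp (B, D) hq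
  have heq1 : p.1 ∩ B = p.1 := inter_eq_left.2 hpB
  have heq2 : p.2 ∩ D = p.2 := inter_eq_left.2 hpD
  have hmem : x ∈ G p ∩ G (B, D) := by
    rw [hfin, heq1, heq2]
    exact hxp
  exact hmem.2
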